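/- arXiv:2006.10695 — 3 statements merged into one kernel-verified Lean document; each statement's English description precedes it below -/
import Mathlib

section
/- Let X₀,…,X_N be (not necessarily independent) centered Gaussian random variables with Var(Xₖ) ≤ δ² for all k. Then E[max_{0≤k≤N} |Xₖ|] ≤ δ·√(2 ln(2(N+1))). -/
open MeasureTheory ProbabilityTheory Real
open scoped NNReal ENNReal

lemma gaussian_pdf_mul (v : ℝ≥0) (hv : v ≠ 0) (t x : ℝ) :
    rexp (t * x) * gaussianPDFReal 0 v x
      = rexp (v * t ^ 2 / 2) * gaussianPDFReal (v * t) v x := by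
  have hv' : (v : ℝ) ≠ 0 := by exact_mod_cast hv
  simp only [gaussianPDFReal]
  rw [show rexp (t * x) * ((√(2 * π * v))⁻¹ * rexp (-(x - 0) ^ 2 / (2 * v)))
      = (√(2 * π * v))⁻¹ * rexp (t * x + -(x - 0) ^ 2 / (2 * v)) by rw [exp_add]; ring,
    show rexp (↑v * t ^ 2 / 2) * ((√(2 * π * v))⁻¹ * rexp (-(x - ↑v * t) ^ 2 / (2 * v)))
      = (√(2 * π * v))⁻¹ * rexp (↑v * t ^ 2 / 2 + -(x - ↑v * t) ^ 2 / (2 * v)) by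
        rw [exp_add]; ring]
  congr 1
  field_simp
  ring

lemma gaussian_mgf (v : ℝ≥0) (t : ℝ) :
    Integrable (fun x => rexp (t * x)) (gaussianReal 0 v) ∧
    ∫ x, rexp (t * x) ∂(gaussianReal 0 v) = rexp (v * t ^ 2 / 2) := by
  rcases eq_or_ne v 0 with hv | hv
  · subst hv
    rw [gaussianReal_zero_var]
    have h0 : (fun x : ℝ => rexp (t * x)) =ᵐ[Measure.dirac (0 : ℝ)]
        fun _ => rexp (t * 0) := by
      rw [Filter.EventuallyEq, MeasureTheory.ae_dirac_eq]
      exact Filter.eventually_pure.2 rfl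
    constructor
    · exact (integrable_const _).congr h0.symm
    · rw [integral_dirac]
      norm_num
  · rw [gaussianReal_of_var_ne_zero _ hv]
    have hd : gaussianPDF 0 v
        = fun x => ((gaussianPDFReal 0 v x).toNNReal : ℝ≥0∞) := rfl
    rw [hd]
    have hmeas : Measurable fun x => (gaussianPDFReal 0 v x).toNNReal :=
      (measurable_gaussianPDFReal 0 v).real_toNNReal
    have hfun : (fun x => (gaussianPDFReal 0 v x).toNNReal • rexp (t * x))
        = fun x => rexp (v * t ^ 2 / 2) * gaussianPDFReal (v * t) v x := by
      funext x
      rw [NNReal.smul_def, smul_eq_mul,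
        Real.coe_toNNReal _ (gaussianPDFReal_nonneg 0 v x), mul_comm,
        gaussian_pdf_mul v hv]
    constructor
    · rw [integrable_withDensity_iff_integrable_smul hmeas]
      rw [show (fun x => (fun x => (gaussianPDFReal 0 v x).toNNReal) x • rexp (t * x))
          = fun x => rexp (v * t ^ 2 / 2) * gaussianPDFReal (v * t) v x from hfun]
      exact (integrable_gaussianPDFReal (v * t) v).const_mul _
    · rw [integral_withDensity_eq_integral_smul hmeas, hfun, integral_const_mul,
        integral_gaussianPDFReal_eq_one _ hv, mul_one]

lemma gaussian_comp_mgf {Ω : Type*} [MeasurableSpace Ω] (μ : Measure Ω)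
    {X : Ω → ℝ} (hX : Measurable X) {v : ℝ≥0}
    (hmap : Measure.map X μ = gaussianReal 0 v) (t : ℝ) :
    Integrable (fun ω => rexp (t * X ω)) μ ∧
    ∫ ω, rexp (t * X ω) ∂μ = rexp (v * t ^ 2 / 2) := by
  obtain ⟨hint, hval⟩ := gaussian_mgf v t
  rw [← hmap] at hint hval
  have hsm : AEStronglyMeasurable (fun x => rexp (t * x)) (Measure.map X μ) :=
    (Real.measurable_exp.comp (measurable_id.const_mul t)).aestronglyMeasurable
  constructor
  · exact (integrable_map_measure hsm hX.aemeasurable).mp hint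
  · rw [← hval, integral_map hX.aemeasurable hsm]

/-- Pisier's lemma: if `X₀,…,X_N` are centered Gaussian random variables with
`Var(Xₖ) ≤ δ²`, then `E[max_k |Xₖ|] ≤ δ·√(2 ln(2(N+1)))`. -/
theorem pisier_max_gaussian
    {Ω : Type*} [MeasurableSpace Ω] (μ : Measure Ω) [IsProbabilityMeasure μ]
    (N : ℕ) (hN : 1 ≤ N) (X : Fin (N + 1) → Ω → ℝ) (δ : ℝ) (hδ : 0 < δ)
    (hmeas : ∀ k, Measurable (X k))
    (hgauss : ∀ k, ∃ v : ℝ≥0, (v : ℝ) ≤ δ ^ 2 ∧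
      Measure.map (X k) μ = gaussianReal 0 v) :
    ∫ ω, (⨆ k : Fin (N + 1), |X k ω|) ∂μ ≤
      δ * Real.sqrt (2 * Real.log (2 * (N + 1))) := by
  set L : ℝ := Real.log (2 * (N + 1)) with hLdef
  have h2N : (1 : ℝ) < 2 * (N + 1) := by
    have hN' : (0 : ℝ) ≤ (N : ℝ) := Nat.cast_nonneg N
    nlinarith
  have hL : 0 < L := Real.log_pos h2N
  set β : ℝ := Real.sqrt (2 * L) / δ with hβdef
  have hβ : 0 < β := div_pos (Real.sqrt_pos.2 (by linarith)) hδ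
  have hsq : Real.sqrt (2 * L) ^ 2 = 2 * L := Real.sq_sqrt (by linarith)
  -- G k : the exponential bounds
  set G : Fin (N + 1) → Ω → ℝ :=
    fun k ω => rexp (β * X k ω) + rexp (-β * X k ω) with hGdef
  have hGnonneg : ∀ k ω, 0 ≤ G k ω := fun k ω => by positivity
  have hGint : ∀ k, Integrable (G k) μ := by
    intro k
    obtain ⟨v, hvle, hmap⟩ := hgauss k
    exact ((gaussian_comp_mgf μ (hmeas k) hmap β).1).add
      ((gaussian_comp_mgf μ (hmeas k) hmap (-β)).1)
  have hGval : ∀ k, ∫ ω, G k ω ∂μ ≤ 2 * rexp L := by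
    intro k
    obtain ⟨v, hvle, hmap⟩ := hgauss k
    have h1 := (gaussian_comp_mgf μ (hmeas k) hmap β)
    have h2 := (gaussian_comp_mgf μ (hmeas k) hmap (-β))
    rw [hGdef]
    rw [integral_add h1.1 h2.1, h1.2, h2.2]
    have hvβ : (v : ℝ) * β ^ 2 / 2 ≤ L := by
      have hββ : β ^ 2 = 2 * L / δ ^ 2 := by
        rw [hβdef, div_pow, hsq]
      have hδ2 : (0:ℝ) < δ ^ 2 := by positivity
      have : (v : ℝ) * β ^ 2 ≤ δ ^ 2 * β ^ 2 := by nlinarith [sq_nonneg β]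
      rw [hββ] at this ⊢
      rw [div_le_iff₀ (by norm_num : (0:ℝ) < 2)] at *
      calc (v:ℝ) * (2 * L / δ ^ 2) ≤ δ ^ 2 * (2 * L / δ ^ 2) := by
            nlinarith [div_nonneg (by nlinarith : (0:ℝ) ≤ 2 * L) hδ2.le]
        _ = 2 * L := by field_simp
        _ = L * 2 := by ring
    have h3 : rexp ((v : ℝ) * β ^ 2 / 2) ≤ rexp L := Real.exp_le_exp.2 hvβ
    have h4 : rexp ((v : ℝ) * (-β) ^ 2 / 2) ≤ rexp L := by
      simpa [neg_sq] using h3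
    linarith
  -- the maximum as a finite sup'
  set M : Ω → ℝ := fun ω => Finset.univ.sup' Finset.univ_nonempty fun k => |X k ω|
    with hMdef
  have hgoal : (∫ ω, (⨆ k : Fin (N + 1), |X k ω|) ∂μ) = ∫ ω, M ω ∂μ := by
    congr 1
    funext ω
    exact (Finset.sup'_univ_eq_ciSup _).symm
  rw [hgoal]
  have hMmeas : Measurable M := by
    have h := Finset.measurable_sup' (Finset.univ_nonempty (α := Fin (N + 1)))
      (f := fun k ω => |X k ω|) (fun k _ => (hmeas k).abs)
    have heq : M = Finset.univ.sup' Finset.univ_nonempty (fun k ω => |X k ω|) := by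
      funext ω
      rw [hMdef, Finset.sup'_apply]
    rwa [heq]
  have hM0 : ∀ ω, 0 ≤ M ω := fun ω =>
    le_trans (abs_nonneg (X 0 ω))
      (Finset.le_sup' (f := fun k => |X k ω|) (Finset.mem_univ (0 : Fin (N + 1))))
  have h1 : ∀ ω, rexp (β * M ω) ≤ ∑ k, G k ω := by
    intro ω
    obtain ⟨j, -, hj⟩ := Finset.exists_mem_eq_sup' Finset.univ_nonempty
      fun k => |X k ω|
    have hMj : M ω = |X j ω| := hj
    have hexpj : rexp (β * M ω) ≤ G j ω := by
      rw [hMj, hGdef]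
      rcases abs_cases (X j ω) with ⟨h, -⟩ | ⟨h, -⟩
      · rw [h]
        exact le_add_of_nonneg_right (Real.exp_pos _).le
      · rw [h, show β * -X j ω = -β * X j ω by ring]
        exact le_add_of_nonneg_left (Real.exp_pos _).le
    exact hexpj.trans (Finset.single_le_sum (fun k _ => hGnonneg k ω)
      (Finset.mem_univ j))
  have hMle : ∀ ω, M ω ≤ β⁻¹ * ∑ k, G k ω := by
    intro ω
    have h2 : β * M ω ≤ ∑ k, G k ω := by
      have h3 := Real.add_one_le_exp (β * M ω)
      linarith [h1 ω]
    rw [← mul_le_mul_iff_of_pos_left hβ, show β * (β⁻¹ * ∑ k, G k ω) = ∑ k, G k ω by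
      field_simp]
    exact h2
  have hSint : Integrable (fun ω => ∑ k, G k ω) μ :=
    integrable_finset_sum _ fun k _ => hGint k
  have hMint : Integrable M μ := by
    refine Integrable.mono' (hSint.const_mul β⁻¹) hMmeas.aestronglyMeasurable
      (ae_of_all _ fun ω => ?_)
    rw [Real.norm_eq_abs, abs_of_nonneg (hM0 ω)]
    exact hMle ω
  have hexpMmeas : Measurable fun ω => rexp (β * M ω) :=
    Real.measurable_exp.comp (hMmeas.const_mul β)
  have hexpint : Integrable (fun ω => rexp (β * M ω)) μ := by
    refine Integrable.mono' hSint hexpMmeas.aestronglyMeasurable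
      (ae_of_all _ fun ω => ?_)
    rw [Real.norm_eq_abs, abs_of_nonneg (Real.exp_pos _).le]
    exact h1 ω
  have hjensen : rexp (β * ∫ ω, M ω ∂μ) ≤ ∫ ω, rexp (β * M ω) ∂μ := by
    have h4 := convexOn_exp.map_integral_le (μ := μ) (f := fun ω => β * M ω)
      continuous_exp.continuousOn isClosed_univ
      (ae_of_all _ fun ω => Set.mem_univ _) (hMint.const_mul β) hexpint
    rwa [integral_const_mul] at h4
  have hsumle : ∫ ω, rexp (β * M ω) ∂μ ≤ ((N : ℝ) + 1) * (2 * rexp L) := by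
    calc ∫ ω, rexp (β * M ω) ∂μ ≤ ∫ ω, ∑ k, G k ω ∂μ :=
          integral_mono hexpint hSint h1
      _ = ∑ k, ∫ ω, G k ω ∂μ := integral_finset_sum _ fun k _ => hGint k
      _ ≤ ∑ _k : Fin (N + 1), 2 * rexp L := Finset.sum_le_sum fun k _ => hGval k
      _ = ((N : ℝ) + 1) * (2 * rexp L) := by
          rw [Finset.sum_const, Finset.card_univ, Fintype.card_fin, nsmul_eq_mul]
          push_cast
          ring
  have hexpL : rexp L = 2 * ((N : ℝ) + 1) := by
    rw [hLdef]
    exact Real.exp_log (by linarith)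
  have key : β * ∫ ω, M ω ∂μ ≤ 2 * L := by
    have h5 : rexp (β * ∫ ω, M ω ∂μ) ≤ rexp (2 * L) := by
      refine (hjensen.trans hsumle).trans (le_of_eq ?_)
      rw [show (2 : ℝ) * L = L + L by ring, Real.exp_add, hexpL]
      ring
    exact Real.exp_le_exp.1 h5
  have hfin : β * (δ * √(2 * L)) = 2 * L := by
    rw [hβdef]
    rw [div_mul_eq_mul_div, div_eq_iff hδ.ne']
    linear_combination δ * hsq
  refine le_of_mul_le_mul_left ?_ hβ
  rw [hfin]
  exact key
end

section
/- Let u⁰,…,u^M ∈ ℂ^{N+1} satisfy, for each m, the identity i(u_j^{m+1}-u_j^m)/Δt + (D₂ u^{m+1/2})_j + V_j^{m+1/2}·u_j^{m+1/2} = ((u_j^m+u_j^{m+1})/2)·g_j^m, where u^{m+1/2}=(u^m+u^{m+1})/2, D₂ is a real symmetric tridiagonal operator (with Neumann boundary closure), V_j^{m+1/2} is real, and g_j^m is real. Then the discrete mass M[u^m] = Σ_j |u_j^m|² is constant in m. -/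
open Complex Matrix

/-- Discrete mass conservation for the Crank–Nicholson-type schemes with real
multiplicative (Stratonovich-discretized) noise: if each time step satisfies
`i(u^{m+1}-u^m)/Δt + D₂ u^{m+1/2} + V^{m+1/2} ⊙ u^{m+1/2} = ((u^m+u^{m+1})/2) ⊙ g^m`
with `D₂` a real symmetric matrix and `V`, `g` real, then the discrete mass
`Σ_j |u_j^m|²` is constant in `m`. -/
theorem discrete_mass_conservation (N M : ℕ) (Δt : ℝ) (hΔt : 0 < Δt)
    (D : Matrix (Fin (N + 1)) (Fin (N + 1)) ℝ) (hD : D.IsSymm)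
    (u : ℕ → Fin (N + 1) → ℂ) (V g : ℕ → Fin (N + 1) → ℝ)
    (hscheme : ∀ m < M, ∀ j,
      Complex.I * (u (m + 1) j - u m j) / (Δt : ℂ) +
          (∑ l, (D j l : ℂ) * ((u m l + u (m + 1) l) / 2)) +
          (V m j : ℂ) * ((u m j + u (m + 1) j) / 2) =
        ((u m j + u (m + 1) j) / 2) * (g m j : ℂ)) :
    ∀ m ≤ M, ∑ j, ‖u m j‖ ^ 2 = ∑ j, ‖u 0 j‖ ^ 2 := by
  have ht : (Δt : ℂ) ≠ 0 := by exact_mod_cast hΔt.ne'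
  have key : ∀ m < M, ∑ j, Complex.normSq (u (m+1) j) = ∑ j, Complex.normSq (u m j) := by
    intro m hm
    set a := u m with ha
    set b := u (m+1) with hb
    set w : Fin (N+1) → ℂ := fun j => (a j + b j)/2 with hw
    -- the scheme multiplied by conj(w j) and summed
    have h0 : ∑ j, ((Complex.I * (b j - a j) / (Δt : ℂ)) * (starRingEnd ℂ) (w j)
          + (∑ l, (D j l : ℂ) * w l) * (starRingEnd ℂ) (w j)
          + (V m j : ℂ) * w j * (starRingEnd ℂ) (w j)
          - w j * (g m j : ℂ) * (starRingEnd ℂ) (w j)) = 0 := by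
      apply Finset.sum_eq_zero
      intro j _
      have h := hscheme m hm j
      have h' : Complex.I * (b j - a j) / (Δt : ℂ) +
          (∑ l, (D j l : ℂ) * w l) + (V m j : ℂ) * w j - w j * (g m j : ℂ) = 0 := by
        rw [sub_eq_zero]; exact h
      have : (Complex.I * (b j - a j) / (Δt : ℂ) +
          (∑ l, (D j l : ℂ) * w l) + (V m j : ℂ) * w j - w j * (g m j : ℂ))
          * (starRingEnd ℂ) (w j) = 0 := by rw [h', zero_mul]
      linear_combination this
    -- split into four sums and take imaginary parts
    rw [Finset.sum_sub_distrib, Finset.sum_add_distrib, Finset.sum_add_distrib] at h0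
    have him := congrArg Complex.im h0
    simp only [Complex.sub_im, Complex.add_im, Complex.zero_im] at him
    -- term 2 is real by symmetry of D
    have h2 : (∑ j, (∑ l, (D j l : ℂ) * w l) * (starRingEnd ℂ) (w j)).im = 0 := by
      rw [← Complex.conj_eq_iff_im]
      rw [map_sum]
      simp only [_root_.map_mul, map_sum, Complex.conj_conj, Complex.conj_ofReal]
      calc ∑ j, (∑ l, (D j l : ℂ) * (starRingEnd ℂ) (w l)) * w j
          = ∑ j, ∑ l, (D j l : ℂ) * (starRingEnd ℂ) (w l) * w j := by
            simp [Finset.sum_mul]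
        _ = ∑ l, ∑ j, (D j l : ℂ) * (starRingEnd ℂ) (w l) * w j := Finset.sum_comm
        _ = ∑ j, (∑ l, (D j l : ℂ) * w l) * (starRingEnd ℂ) (w j) := by
            apply Finset.sum_congr rfl
            intro j _
            rw [Finset.sum_mul]
            apply Finset.sum_congr rfl
            intro l _
            have hsym : D l j = D j l := hD.apply j l
            rw [hsym]; ring
    have h3 : (∑ j, (V m j : ℂ) * w j * (starRingEnd ℂ) (w j)).im = 0 := by
      rw [Complex.im_sum]
      apply Finset.sum_eq_zero
      intro j _
      rw [mul_assoc, Complex.mul_conj]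
      simp
    have h4 : (∑ j, w j * (g m j : ℂ) * (starRingEnd ℂ) (w j)).im = 0 := by
      rw [Complex.im_sum]
      apply Finset.sum_eq_zero
      intro j _
      have : w j * (g m j : ℂ) * (starRingEnd ℂ) (w j)
          = (g m j : ℂ) * (w j * (starRingEnd ℂ) (w j)) := by ring
      rw [this, Complex.mul_conj]
      simp
    rw [h2, h3, h4] at him
    have h1 : (∑ j, (Complex.I * (b j - a j) / (Δt : ℂ)) * (starRingEnd ℂ) (w j)).im
        = (∑ j, (Complex.normSq (b j) - Complex.normSq (a j))) / (2*Δt) := by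
      rw [Complex.im_sum, Finset.sum_div]
      apply Finset.sum_congr rfl
      intro j _
      simp only [hw]
      rw [div_mul_eq_mul_div, Complex.div_im]
      simp only [Complex.normSq_apply, Complex.mul_re, Complex.mul_im, Complex.I_re,
        Complex.I_im, Complex.sub_re, Complex.sub_im, Complex.add_re, Complex.add_im,
        Complex.ofReal_re, Complex.ofReal_im, Complex.conj_re, Complex.conj_im,
        Complex.div_re, Complex.div_im, Complex.re_ofNat, Complex.im_ofNat]
      field_simp
      ring
    rw [h1] at him
    field_simp at him
    rw [Finset.sum_sub_distrib] at him
    linarith [him]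
  intro m hm
  induction m with
  | zero => rfl
  | succ k ih =>
    have hk : k < M := hm
    have := key k hk
    simp only [Complex.sq_norm] at *
    rw [this, ih (le_of_lt hk)]
end

section
/- Let A be a real symmetric matrix and v, w ∈ ℂ^n with w = (v+v')/2 for some v'. If i(v' - v) + A w + D w = c ⊙ w with D a real diagonal matrix and c a real vector (componentwise product), then Σ_j |v'_j|² = Σ_j |v_j|². -/
open Complex Matrix

/-- Abstract discrete mass conservation: if `A` is real symmetric, `D = diag d` real,
`c` real, `w = (v+v')/2` and `i(v'-v) + A w + D w = c ⊙ w`, then `Σ|v'_j|² = Σ|v_j|²`. -/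
theorem abstract_mass_conservation (n : ℕ)
    (A : Matrix (Fin n) (Fin n) ℝ) (hA : A.IsSymm)
    (d c : Fin n → ℝ) (v v' w : Fin n → ℂ)
    (hw : ∀ j, w j = (v j + v' j) / 2)
    (heq : ∀ j, Complex.I * (v' j - v j) + (∑ l, (A j l : ℂ) * w l) +
        (d j : ℂ) * w j = (c j : ℂ) * w j) :
    ∑ j, ‖v' j‖ ^ 2 = ∑ j, ‖v j‖ ^ 2 := by
  have key : (∑ j, (Complex.I * (v' j - v j) + (∑ l, (A j l : ℂ) * w l) +
      (d j : ℂ) * w j) * (starRingEnd ℂ) (w j)).im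
      = (∑ j, (c j : ℂ) * w j * (starRingEnd ℂ) (w j)).im := by
    congr 2
    ext j
    rw [heq j]
  -- RHS is real
  have hc : (∑ j, (c j : ℂ) * w j * (starRingEnd ℂ) (w j)).im = 0 := by
    rw [Complex.im_sum]
    apply Finset.sum_eq_zero
    intro j _
    rw [mul_assoc, Complex.mul_conj]
    simp
  -- matrix term is real
  have hmat : (∑ j, (∑ l, (A j l : ℂ) * w l) * (starRingEnd ℂ) (w j)).im = 0 := by
    rw [← Complex.conj_eq_iff_im]
    simp only [map_sum, _root_.map_mul, Complex.conj_ofReal, Complex.conj_conj]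
    simp only [Finset.sum_mul]
    rw [Finset.sum_comm]
    apply Finset.sum_congr rfl
    intro l _
    apply Finset.sum_congr rfl
    intro j _
    rw [hA.apply l j]
    ring
  -- diagonal term is real
  have hd : (∑ j, ((d j : ℂ) * w j) * (starRingEnd ℂ) (w j)).im = 0 := by
    rw [Complex.im_sum]
    apply Finset.sum_eq_zero
    intro j _
    rw [mul_assoc, Complex.mul_conj]
    simp
  have hsplit : (∑ j, (Complex.I * (v' j - v j)) * (starRingEnd ℂ) (w j)).im = 0 := by
    have expand : (∑ j, (Complex.I * (v' j - v j) + (∑ l, (A j l : ℂ) * w l) +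
        (d j : ℂ) * w j) * (starRingEnd ℂ) (w j))
        = (∑ j, (Complex.I * (v' j - v j)) * (starRingEnd ℂ) (w j))
          + (∑ j, (∑ l, (A j l : ℂ) * w l) * (starRingEnd ℂ) (w j))
          + (∑ j, ((d j : ℂ) * w j) * (starRingEnd ℂ) (w j)) := by
      rw [← Finset.sum_add_distrib, ← Finset.sum_add_distrib]
      apply Finset.sum_congr rfl
      intro j _
      ring
    have := key
    rw [expand] at this
    simp only [Complex.add_im, hmat, hd, hc, add_zero] at this
    exact this
  -- compute the imaginary part explicitly
  have hterm : ∀ j, ((Complex.I * (v' j - v j)) * (starRingEnd ℂ) (w j)).im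
      = (Complex.normSq (v' j) - Complex.normSq (v j)) / 2 := by
    intro j
    rw [hw j]
    simp [Complex.ext_iff, Complex.mul_im, Complex.mul_re, Complex.normSq_apply,
      Complex.div_re, Complex.div_im, Complex.normSq]
    ring
  rw [Complex.im_sum] at hsplit
  simp only [hterm] at hsplit
  have h2 : ∑ j, (Complex.normSq (v' j) - Complex.normSq (v j)) = 0 := by
    rw [← Finset.sum_div, div_eq_zero_iff] at hsplit
    rcases hsplit with h | h
    · exact h
    · norm_num at h
  rw [Finset.sum_sub_distrib] at h2
  simp only [Complex.sq_norm]
  linarith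
end
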